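/- Let f : ℝ² → ℝ be C¹ with ∇f(p₀) ≠ 0. Then in a neighborhood of p₀, the level set {p : f(p) = f(p₀)} is the image of an integral curve of the Hamiltonian vector field H_f = (-∂f/∂y, ∂f/∂x); that is, there exists δ > 0 and an integral curve γ : (-δ, δ) → ℝ² of H_f with γ(0) = p₀ whose image is exactly a relatively open neighborhood of p₀ in the level set. -/

import Mathlib

open Set

lemma apply_pair' (L : ℝ × ℝ →L[ℝ] ℝ) (u v : ℝ) : L (u, v) = u * L (1,0) + v * L (0,1) := by
  have h : (u, v) = u • ((1:ℝ),(0:ℝ)) + v • ((0:ℝ),(1:ℝ)) := by simp [Prod.ext_iff]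
  rw [h, map_add, map_smul, map_smul]; simp

lemma key17 (f : ℝ × ℝ → ℝ) (hf : ContDiff ℝ 1 f) (p₀ : ℝ × ℝ)
    (hy : fderiv ℝ f p₀ (0, 1) ≠ 0) :
    ∃ δ > (0 : ℝ), ∃ γ : ℝ → ℝ × ℝ,
      γ 0 = p₀ ∧
      (∀ t ∈ Set.Ioo (-δ) δ,
        HasDerivAt γ (-(fderiv ℝ f (γ t) (0, 1)), fderiv ℝ f (γ t) (1, 0)) t) ∧
      ∃ U ∈ nhds p₀,
        γ '' Set.Ioo (-δ) δ = {p : ℝ × ℝ | f p = f p₀} ∩ U := by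
  have hdf : Differentiable ℝ f := hf.differentiable one_ne_zero
  set c := f p₀ with hc
  set x₀ := p₀.1 with hx₀def
  -- the map Φ
  set Φ : ℝ × ℝ → ℝ × ℝ := fun p => (p.1, f p) with hΦdef
  have hΦc : ContDiff ℝ 1 Φ := contDiff_fst.prodMk hf
  set L : ℝ × ℝ →L[ℝ] ℝ := fderiv ℝ f p₀ with hL
  set A : ℝ × ℝ →L[ℝ] ℝ × ℝ := (ContinuousLinearMap.fst ℝ ℝ ℝ).prod L with hA
  set B : ℝ × ℝ →L[ℝ] ℝ × ℝ := (ContinuousLinearMap.fst ℝ ℝ ℝ).prod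
      ((L (0,1))⁻¹ • (ContinuousLinearMap.snd ℝ ℝ ℝ - L (1,0) • ContinuousLinearMap.fst ℝ ℝ ℝ))
      with hB
  have h1 : Function.LeftInverse B A := by
    rintro ⟨u, v⟩
    simp only [hA, hB, ContinuousLinearMap.prod_apply, ContinuousLinearMap.coe_fst',
      ContinuousLinearMap.smul_apply, ContinuousLinearMap.sub_apply,
      ContinuousLinearMap.coe_snd', ContinuousLinearMap.coe_smul']
    refine Prod.ext rfl ?_
    simp only [apply_pair' L u v]
    field_simp [hy]
    linear_combination v * mul_inv_cancel₀ hy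
  have h2 : Function.RightInverse B A := by
    rintro ⟨a, b⟩
    simp only [hA, hB, ContinuousLinearMap.prod_apply, ContinuousLinearMap.coe_fst',
      ContinuousLinearMap.smul_apply, ContinuousLinearMap.sub_apply,
      ContinuousLinearMap.coe_snd', ContinuousLinearMap.coe_smul']
    refine Prod.ext rfl ?_
    rw [apply_pair' L]
    field_simp [hy]
    linear_combination (b - a * L (1,0)) * mul_inv_cancel₀ hy
  set e : (ℝ × ℝ) ≃L[ℝ] (ℝ × ℝ) := ContinuousLinearEquiv.equivOfInverse A B h1 h2 with he
  have hAderiv : HasFDerivAt Φ (A : (ℝ × ℝ) →L[ℝ] ℝ × ℝ) p₀ :=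
    (hasFDerivAt_fst).prodMk (hdf p₀).hasFDerivAt
  have heA : (e : (ℝ × ℝ) →L[ℝ] ℝ × ℝ) = A := rfl
  have hederiv : HasFDerivAt Φ (e : (ℝ × ℝ) →L[ℝ] ℝ × ℝ) p₀ := heA ▸ hAderiv
  set Φloc := hΦc.contDiffAt.toOpenPartialHomeomorph Φ hederiv one_ne_zero with hΦloc
  have hcoe : ⇑Φloc = Φ := rfl
  have hp₀s : p₀ ∈ Φloc.source := hΦc.contDiffAt.mem_toOpenPartialHomeomorph_source hederiv one_ne_zero
  have htgt : (x₀, c) ∈ Φloc.target := by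
    have := hΦc.contDiffAt.image_mem_toOpenPartialHomeomorph_target hederiv one_ne_zero
    simpa [hΦdef] using this
  have hleft₀ : Φloc.symm (x₀, c) = p₀ := by
    have := Φloc.left_inv hp₀s
    rwa [hcoe] at this
  -- the implicit function g
  set g : ℝ → ℝ := fun x => (Φloc.symm (x, c)).2 with hg
  have hg₀ : g x₀ = p₀.2 := by rw [hg]; simp [hleft₀]
  -- differentiability of symm near (x₀, c)
  have hsymm_cd : ContDiffAt ℝ 1 Φloc.symm (x₀, c) := by
    have h1' : HasFDerivAt Φloc (e : (ℝ × ℝ) →L[ℝ] ℝ × ℝ) (Φloc.symm (x₀, c)) := by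
      rw [hleft₀, hcoe]; exact hederiv
    have h2' : ContDiffAt ℝ 1 Φloc (Φloc.symm (x₀, c)) := by
      rw [hleft₀]; rw [hcoe] at *; exact hΦc.contDiffAt
    exact Φloc.contDiffAt_symm htgt h1' h2'
  obtain ⟨V, hVmem, hVcd⟩ := hsymm_cd.contDiffOn le_rfl (by simp)
  have hVint : (x₀, c) ∈ interior V := mem_interior_iff_mem_nhds.2 hVmem
  -- the good set T of x-values
  set S : Set ℝ := {x | (x, c) ∈ Φloc.target ∧ (x, c) ∈ interior V} with hS
  have hSopen : IsOpen S := by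
    have : S = (fun x : ℝ => (x, c)) ⁻¹' (Φloc.target ∩ interior V) := rfl
    rw [this]
    exact (Φloc.open_target.inter isOpen_interior).preimage (Continuous.prodMk continuous_id continuous_const)
  have hx₀S : x₀ ∈ S := ⟨htgt, hVint⟩
  have hgdiffS : ∀ x ∈ S, DifferentiableAt ℝ g x := by
    intro x hx
    have hd1 : DifferentiableAt ℝ Φloc.symm (x, c) :=
      ((hVcd.differentiableOn one_ne_zero).differentiableAt
        (mem_interior_iff_mem_nhds.1 hx.2)).congr_of_eventuallyEq (by rfl)
    exact (differentiable_snd.differentiableAt).comp x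
      (hd1.comp x ((differentiableAt_id).prodMk (differentiableAt_const c)))
  -- shrink to make fy nonzero
  have hfycont : Continuous fun p : ℝ × ℝ => fderiv ℝ f p (0,1) :=
    (hf.continuous_fderiv one_ne_zero).clm_apply continuous_const
  set T : Set ℝ := {x ∈ S | fderiv ℝ f (x, g x) (0,1) ≠ 0} with hT
  have hTopen : IsOpen T := by
    have hgc : ContinuousOn g S := fun x hx => ((hgdiffS x hx).continuousAt).continuousWithinAt
    have hcont : ContinuousOn (fun x => fderiv ℝ f (x, g x) (0,1)) S :=
      hfycont.comp_continuousOn ((continuousOn_id).prodMk hgc)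
    have : T = S ∩ (fun x => fderiv ℝ f (x, g x) (0,1)) ⁻¹' ({0}ᶜ) := rfl
    rw [this]
    exact hcont.isOpen_inter_preimage hSopen (isOpen_compl_singleton)
  have hx₀T : x₀ ∈ T := by
    refine ⟨hx₀S, ?_⟩
    rw [hg₀]
    simpa [hx₀def] using hy
  obtain ⟨ε, hεpos, hball⟩ := Metric.isOpen_iff.1 hTopen x₀ hx₀T
  set J : Set ℝ := Ioo (x₀ - ε) (x₀ + ε) with hJ
  have hJopen : IsOpen J := isOpen_Ioo
  have hx₀J : x₀ ∈ J := by constructor <;> simp [hεpos] <;> linarith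
  have hJT : J ⊆ T := by rw [hJ, ← Real.ball_eq_Ioo]; exact hball
  have hJS : J ⊆ S := fun x hx => (hJT hx).1
  -- facts on J
  have htx : ∀ x ∈ J, (x, c) ∈ Φloc.target := fun x hx => (hJS hx).1
  have hsymm_mem : ∀ x ∈ J, Φloc.symm (x, c) ∈ Φloc.source :=
    fun x hx => Φloc.map_target (htx x hx)
  have hright : ∀ x ∈ J, Φ (Φloc.symm (x, c)) = (x, c) := by
    intro x hx
    rw [← hcoe]; exact Φloc.right_inv (htx x hx)
  have hgx : ∀ x ∈ J, Φloc.symm (x, c) = (x, g x) := by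
    intro x hx
    have h1' := hright x hx
    have : (Φloc.symm (x, c)).1 = x := congrArg Prod.fst h1'
    exact Prod.ext this rfl
  have hfgc : ∀ x ∈ J, f (x, g x) = c := by
    intro x hx
    have h1' := hright x hx
    rw [hgx x hx] at h1'
    exact congrArg Prod.snd h1'
  have hfyJ : ∀ x ∈ J, fderiv ℝ f (x, g x) (0,1) ≠ 0 := fun x hx => (hJT hx).2
  have hgd : ∀ x ∈ J, HasDerivAt g (deriv g x) x :=
    fun x hx => (hgdiffS x (hJS hx)).hasDerivAt
  -- derivative formula for g
  have hgd' : ∀ x ∈ J, fderiv ℝ f (x, g x) (1, deriv g x) = 0 := by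
    intro x hx
    have hcurve : HasDerivAt (fun s => (s, g s)) (1, deriv g x) x :=
      (hasDerivAt_id x).prodMk (hgd x hx)
    have hcomp : HasDerivAt (fun s => f (s, g s)) (fderiv ℝ f (x, g x) (1, deriv g x)) x :=
      (hdf (x, g x)).hasFDerivAt.comp_hasDerivAt x hcurve
    have hconst : HasDerivAt (fun s : ℝ => f (s, g s)) 0 x := by
      have hev : (fun s : ℝ => f (s, g s)) =ᶠ[nhds x] fun _ => c :=
        Filter.eventuallyEq_of_mem (hJopen.mem_nhds hx) (fun s hs => hfgc s hs)
      exact (hasDerivAt_const x c).congr_of_eventuallyEq hev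
    exact hcomp.unique hconst
  have hgderiv : ∀ x ∈ J, deriv g x
      = -(fderiv ℝ f (x, g x) (1,0)) / fderiv ℝ f (x, g x) (0,1) := by
    intro x hx
    have h0 := hgd' x hx
    rw [apply_pair'] at h0
    field_simp [hfyJ x hx]
    linarith [h0]
  -- the integrand
  set rho : ℝ → ℝ := fun s => (-(fderiv ℝ f (s, g s) (0,1)))⁻¹ with hrho
  have hgcJ : ContinuousOn g J := fun x hx => ((hgdiffS x (hJS hx)).continuousAt).continuousWithinAt
  have hrhocont : ContinuousOn rho J := by
    have h1' : ContinuousOn (fun x => fderiv ℝ f (x, g x) (0,1)) J :=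
      hfycont.comp_continuousOn ((continuousOn_id).prodMk hgcJ)
    exact (h1'.neg).inv₀ (fun x hx => neg_ne_zero.2 (hfyJ x hx))
  have hrhone : ∀ x ∈ J, rho x ≠ 0 := fun x hx => inv_ne_zero (neg_ne_zero.2 (hfyJ x hx))
  set F : ℝ → ℝ := fun x => ∫ s in x₀..x, rho s with hF
  have hFd : ∀ x ∈ J, HasDerivAt F (rho x) x := by
    intro x hx
    refine intervalIntegral.integral_hasDerivAt_right ?_ ?_ ?_
    · exact (hrhocont.mono (Set.ordConnected_Ioo.uIcc_subset hx₀J hx)).intervalIntegrable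
    · exact (hrhocont.stronglyMeasurableAtFilter hJopen x hx)
    · exact hrhocont.continuousAt (hJopen.mem_nhds hx)
  have hFcdon : ContDiffOn ℝ 1 F J := by
    rw [show (1 : WithTop ℕ∞) = 0 + 1 by norm_num, contDiffOn_succ_iff_deriv_of_isOpen hJopen]
    refine ⟨fun x hx => ((hFd x hx).differentiableAt).differentiableWithinAt, by simp, ?_⟩
    rw [contDiffOn_zero]
    exact hrhocont.congr fun x hx => (hFd x hx).deriv
  have hFcd : ContDiffAt ℝ 1 F x₀ := hFcdon.contDiffAt (hJopen.mem_nhds hx₀J)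
  have hrx₀ : rho x₀ ≠ 0 := hrhone x₀ hx₀J
  set AF : ℝ →L[ℝ] ℝ := rho x₀ • ContinuousLinearMap.id ℝ ℝ with hAF
  set BF : ℝ →L[ℝ] ℝ := (rho x₀)⁻¹ • ContinuousLinearMap.id ℝ ℝ with hBF
  set eF : ℝ ≃L[ℝ] ℝ := ContinuousLinearEquiv.equivOfInverse AF BF
    (fun x => by simp only [hAF, hBF, ContinuousLinearMap.smul_apply, ContinuousLinearMap.coe_id', id, smul_eq_mul]; rw [← mul_assoc, inv_mul_cancel₀ hrx₀, one_mul])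
    (fun x => by simp only [hAF, hBF, ContinuousLinearMap.smul_apply, ContinuousLinearMap.coe_id', id, smul_eq_mul]; rw [← mul_assoc, mul_inv_cancel₀ hrx₀, one_mul]) with heF
  have hFeq : HasFDerivAt F (eF : ℝ →L[ℝ] ℝ) x₀ := by
    have h1' := (hFd x₀ hx₀J).hasFDerivAt
    refine h1'.congr_fderiv ?_
    ext u
    simp [heF, hAF, mul_comm]
  set Ψ := (hFcd.toOpenPartialHomeomorph F hFeq one_ne_zero).restrOpen J hJopen with hΨ
  have hΨcoe : ⇑Ψ = F := rfl
  have hΨsource : Ψ.source ⊆ J := by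
    rw [hΨ, OpenPartialHomeomorph.restrOpen_source]; exact inter_subset_right
  have hx₀Ψ : x₀ ∈ Ψ.source := by
    rw [hΨ, OpenPartialHomeomorph.restrOpen_source]
    exact ⟨hFcd.mem_toOpenPartialHomeomorph_source hFeq one_ne_zero, hx₀J⟩
  have hF0 : F x₀ = 0 := intervalIntegral.integral_same
  have h0tgt : (0:ℝ) ∈ Ψ.target := by
    have := Ψ.map_source hx₀Ψ
    rwa [hΨcoe, hF0] at this
  obtain ⟨δ, hδpos, hδball⟩ := Metric.isOpen_iff.1 Ψ.open_target 0 h0tgt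
  have hIooδ : Ioo (-δ) δ ⊆ Ψ.target := by
    rw [show Ioo (-δ) δ = Metric.ball (0:ℝ) δ by rw [Real.ball_eq_Ioo]; norm_num]
    exact hδball
  set xt : ℝ → ℝ := fun t => Ψ.symm t with hxt
  set γ : ℝ → ℝ × ℝ := fun t => (xt t, g (xt t)) with hγ
  have h00 : xt 0 = x₀ := by
    have := Ψ.left_inv hx₀Ψ
    rwa [hΨcoe, hF0] at this
  refine ⟨δ, hδpos, γ, ?_, ?_, ?_⟩
  · rw [hγ]
    simp only
    rw [h00, hg₀]
  · intro t ht
    have httgt : t ∈ Ψ.target := hIooδ ht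
    have hxtJ : xt t ∈ J := hΨsource (Ψ.map_target httgt)
    have hxd : HasDerivAt xt (rho (xt t))⁻¹ t := by
      refine HasDerivAt.of_local_left_inverse (Ψ.continuousAt_symm httgt)
        (hFd (xt t) hxtJ) (hrhone _ hxtJ) ?_
      filter_upwards [Ψ.open_target.mem_nhds httgt] with y hy
      have := Ψ.right_inv hy
      rwa [hΨcoe] at this
    have hrhoval : (rho (xt t))⁻¹ = -(fderiv ℝ f (xt t, g (xt t)) (0,1)) := by
      rw [hrho]; simp
    have hgc : HasDerivAt (fun u => g (xt u)) (deriv g (xt t) * (rho (xt t))⁻¹) t :=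
      (hgd _ hxtJ).comp t hxd
    have hγd : HasDerivAt γ ((rho (xt t))⁻¹, deriv g (xt t) * (rho (xt t))⁻¹) t := hxd.prodMk hgc
    convert hγd using 1
    have h1' : γ t = (xt t, g (xt t)) := rfl
    rw [h1']
    refine Prod.ext ?_ ?_ <;> simp only
    · rw [hrhoval]
    · rw [hrhoval, hgderiv _ hxtJ]
      field_simp [hfyJ _ hxtJ]
  · set W := xt '' Ioo (-δ) δ with hW
    have hWopen : IsOpen W := by
      refine Ψ.symm.isOpen_image_of_subset_source isOpen_Ioo ?_
      rw [OpenPartialHomeomorph.symm_source]; exact hIooδ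
    have hx₀W : x₀ ∈ W := ⟨0, by constructor <;> simpa using hδpos, h00⟩
    refine ⟨Φloc.source ∩ (Prod.fst ⁻¹' W), ?_, ?_⟩
    · exact (Φloc.open_source.inter (hWopen.preimage continuous_fst)).mem_nhds
        ⟨hp₀s, by simpa [hx₀def] using hx₀W⟩
    · ext p
      constructor
      · rintro ⟨t, ht, rfl⟩
        have httgt : t ∈ Ψ.target := hIooδ ht
        have hxtJ : xt t ∈ J := hΨsource (Ψ.map_target httgt)
        refine ⟨hfgc _ hxtJ, ?_, ⟨t, ht, rfl⟩⟩
        have := hsymm_mem _ hxtJ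
        rwa [hgx _ hxtJ] at this
      · rintro ⟨hfp, hps, hpW⟩
        obtain ⟨t, ht, hxt_eq⟩ := hpW
        have httgt : t ∈ Ψ.target := hIooδ ht
        have hp1J : p.1 ∈ J := hxt_eq ▸ hΨsource (Ψ.map_target httgt)
        have hΦp : Φ p = (p.1, c) := Prod.ext rfl hfp
        have hpsymm : Φloc.symm (p.1, c) = p := by
          rw [← hΦp, ← hcoe]
          exact Φloc.left_inv hps
        have hpg : p = (p.1, g p.1) := by rw [← hgx _ hp1J, hpsymm]
        exact ⟨t, ht, by rw [hγ]; simp only; rw [hxt_eq, ← hpg]⟩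

/-- If `f : ℝ² → ℝ` is C¹ with `∇f p₀ ≠ 0`, then near `p₀` the level set
`{p | f p = f p₀}` is the image of an integral curve of the Hamiltonian vector
field `H_f = (-∂f/∂y, ∂f/∂x)`: there are `δ > 0` and an integral curve
`γ : (-δ, δ) → ℝ²` of `H_f` with `γ 0 = p₀` whose image is exactly the
intersection of the level set with a neighborhood of `p₀`. -/
theorem stmt_17 (f : ℝ × ℝ → ℝ) (hf : ContDiff ℝ 1 f) (p₀ : ℝ × ℝ)
    (hgrad : fderiv ℝ f p₀ ≠ 0) :
    ∃ δ > (0 : ℝ), ∃ γ : ℝ → ℝ × ℝ,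
      γ 0 = p₀ ∧
      (∀ t ∈ Set.Ioo (-δ) δ,
        HasDerivAt γ (-(fderiv ℝ f (γ t) (0, 1)), fderiv ℝ f (γ t) (1, 0)) t) ∧
      ∃ U ∈ nhds p₀,
        γ '' Set.Ioo (-δ) δ = {p : ℝ × ℝ | f p = f p₀} ∩ U := by
  by_cases hy : fderiv ℝ f p₀ (0, 1) ≠ 0
  · exact key17 f hf p₀ hy
  · push_neg at hy
    have hx : fderiv ℝ f p₀ (1, 0) ≠ 0 := by
      intro h0
      apply hgrad
      refine ContinuousLinearMap.ext fun q => ?_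
      rw [show q = (q.1, q.2) from rfl, apply_pair', h0, hy]
      simp
    set σ : ℝ × ℝ →L[ℝ] ℝ × ℝ :=
      (ContinuousLinearMap.snd ℝ ℝ ℝ).prod (ContinuousLinearMap.fst ℝ ℝ ℝ) with hσ
    set f' : ℝ × ℝ → ℝ := fun p => -f (p.2, p.1) with hf'def
    have hf'c : ContDiff ℝ 1 f' := (hf.comp (contDiff_snd.prodMk contDiff_fst)).neg
    have hder : ∀ q : ℝ × ℝ, fderiv ℝ f' q = -(fderiv ℝ f (q.2, q.1)).comp σ := by
      intro q
      have hswap : HasFDerivAt (fun p : ℝ × ℝ => ((p.2, p.1) : ℝ × ℝ)) σ q := σ.hasFDerivAt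
      have h1 : HasFDerivAt (fun p : ℝ × ℝ => f (p.2, p.1)) ((fderiv ℝ f (q.2, q.1)).comp σ) q :=
        ((hf.differentiable one_ne_zero (q.2, q.1)).hasFDerivAt).comp q hswap
      exact h1.neg.fderiv
    have happ : ∀ (q : ℝ × ℝ) (u v : ℝ),
        fderiv ℝ f' q (u, v) = -(fderiv ℝ f (q.2, q.1) (v, u)) := by
      intro q u v
      rw [hder]
      rfl
    have hy' : fderiv ℝ f' (p₀.2, p₀.1) (0, 1) ≠ 0 := by
      rw [happ]
      simpa using hx
    obtain ⟨δ, hδpos, γ', h0', hderiv', U', hU', himg'⟩ := key17 f' hf'c (p₀.2, p₀.1) hy'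
    refine ⟨δ, hδpos, fun t => ((γ' t).2, (γ' t).1), ?_, ?_, ?_⟩
    · show ((γ' 0).2, (γ' 0).1) = p₀
      rw [h0']
    · intro t ht
      have h1 := hderiv' t ht
      have h2 : HasDerivAt (fun t => ((γ' t).2, (γ' t).1))
          (σ (-(fderiv ℝ f' (γ' t) (0,1)), fderiv ℝ f' (γ' t) (1,0))) t :=
        σ.hasFDerivAt.comp_hasDerivAt t h1
      convert h2 using 1
      have hσapp : σ (-(fderiv ℝ f' (γ' t) (0,1)), fderiv ℝ f' (γ' t) (1,0))
          = (fderiv ℝ f' (γ' t) (1,0), -(fderiv ℝ f' (γ' t) (0,1))) := rfl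
      rw [hσapp, happ, happ]
      simp
    · refine ⟨Prod.swap '' U', ?_, ?_⟩
      · rw [Set.image_swap_eq_preimage_swap]
        exact continuous_swap.continuousAt.preimage_mem_nhds hU'
      · have him : (fun t => ((γ' t).2, (γ' t).1)) '' Ioo (-δ) δ
            = Prod.swap '' (γ' '' Ioo (-δ) δ) := by
          rw [Set.image_image]; rfl
        rw [him, himg', Set.image_inter Prod.swap_injective]
        congr 1
        rw [Set.image_swap_eq_preimage_swap]
        ext p
        simp only [Set.mem_preimage, Set.mem_setOf_eq, hf'def]
        exact neg_inj
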